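/- For every integer k ≥ 3, the independence number of the graph 𝒜_k equals k − 2. -/

import Mathlib

open SimpleGraph

/-- Vertices of the graph `𝒜_k` (and `𝒜_{k,S}`): `Sum.inl a` with `a : Fin 3` is the
unstretched vertex `a + 1 ∈ {1,2,3}`, and `Sum.inr (j, t)` with `j : Fin (k-3)` encodes,
for `i = j + 4 ∈ {4,…,k}`, the hub `i₀` (when `t = 0`) and the wings `i₁, i₂`
(when `t = 1, 2`). -/
abbrev AVert (k : ℕ) := Fin 3 ⊕ (Fin (k - 3) × Fin 3)

/-- Edges of `𝒜_{k,S}`: the triangle `{1,2},{2,3},{1,3}`; for each `4 ≤ i ≤ k` the edges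
`{i₀,i₁}, {i₀,i₂}, {i₁,2}, {i₁,3}, {i₂,1}`; for `4 ≤ i < j ≤ k` the edges `{i₂, j₁}`;
and additionally `{i₂, 2}` for `i ∈ S`. -/
def ARel (k : ℕ) (S : Finset ℕ) : AVert k → AVert k → Prop
  | Sum.inl _, Sum.inl _ => True
  | Sum.inl _, Sum.inr _ => False
  | Sum.inr (j, t), Sum.inl a =>
      (t = 1 ∧ (a = 1 ∨ a = 2)) ∨ (t = 2 ∧ a = 0) ∨ (t = 2 ∧ a = 1 ∧ (j : ℕ) + 4 ∈ S)
  | Sum.inr (j, t), Sum.inr (j', t') =>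
      (j = j' ∧ t = 0 ∧ t' ≠ 0) ∨ (t = 2 ∧ t' = 1 ∧ (j : ℕ) < (j' : ℕ))

/-- The graph `𝒜_{k,S}`; the graph `𝒜_k` is `AGraph k ∅`. -/
def AGraph (k : ℕ) (S : Finset ℕ) : SimpleGraph (AVert k) :=
  SimpleGraph.fromRel (ARel k S)

/-- The independence (stability) number of a graph. -/
noncomputable def indepNum {W : Type*} [Fintype W] (G : SimpleGraph W) : ℕ :=
  sSup {n | ∃ s : Finset W, ((↑s : Set W).Pairwise fun u w => ¬ G.Adj u w) ∧ s.card = n}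

set_option maxHeartbeats 1000000 in
/-- For every `k ≥ 3`, the independence number of `𝒜_k` equals `k - 2`. -/
theorem AGraph_indepNum (k : ℕ) (hk : 3 ≤ k) : _root_.indepNum (AGraph k ∅) = k - 2 := by
  classical
  have hm1 : k - 2 = (k - 3) + 1 := by omega
  set m := k - 3 with hmdef
  -- basic adjacency unfolding
  have hadj : ∀ u w : AVert k, (AGraph k ∅).Adj u w ↔ u ≠ w ∧ (ARel k ∅ u w ∨ ARel k ∅ w u) := by
    intro u w
    simp [AGraph, SimpleGraph.fromRel_adj]
  apply le_antisymm
  · -- upper bound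
    refine csSup_le ⟨0, ⟨∅, by simp, rfl⟩⟩ ?_
    rintro n ⟨s, hs, rfl⟩
    have hrel : ∀ u ∈ s, ∀ w ∈ s, u ≠ w → ¬ ARel k ∅ u w := by
      intro u hu w hw hne hr
      exact hs hu hw hne ((hadj u w).2 ⟨hne, Or.inl hr⟩)
    set F : AVert k → ℕ := fun v => match v with
      | Sum.inl _ => m
      | Sum.inr (j, t) => if t = 2 ∧ Sum.inr (j, 1) ∈ s then m else (j : ℕ)
      with hF
    have hmaps : ∀ v ∈ s, F v ∈ Finset.range (m + 1) := by
      rintro (a | ⟨j, t⟩) hv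
      · simp [hF]
      · by_cases h : t = 2 ∧ Sum.inr (j, 1) ∈ s <;>
          simp [hF, h, Nat.lt_succ_iff, Nat.lt_succ_of_lt j.isLt, le_of_lt j.isLt, hmdef]
    have hinj : Set.InjOn F ↑s := by
      rintro (a | ⟨j, t⟩) hu (b | ⟨j', t'⟩) hw heq
      · -- inl, inl
        by_contra hne
        exact hrel _ hu _ hw hne trivial
      · -- inl, inr
        exfalso
        by_cases h : t' = 2 ∧ Sum.inr (j', 1) ∈ s
        · obtain ⟨ht', h1⟩ := h
          subst ht'
          have ha0 : a ≠ 0 := by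
            intro h0; subst h0
            exact hrel _ hw _ hu (by simp) (Or.inr (Or.inl ⟨rfl, rfl⟩))
          have ha12 : ¬ (a = 1 ∨ a = 2) := by
            intro h12
            exact hrel _ h1 _ hu (by simp) (Or.inl ⟨rfl, h12⟩)
          fin_cases a <;> simp_all
        · simp only [hF, if_neg h] at heq
          exact absurd heq.symm (Nat.ne_of_lt j'.isLt)
      · -- inr, inl
        exfalso
        by_cases h : t = 2 ∧ Sum.inr (j, 1) ∈ s
        · obtain ⟨ht, h1⟩ := h
          subst ht
          have ha0 : b ≠ 0 := by
            intro h0; subst h0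
            exact hrel _ hu _ hw (by simp) (Or.inr (Or.inl ⟨rfl, rfl⟩))
          have ha12 : ¬ (b = 1 ∨ b = 2) := by
            intro h12
            exact hrel _ h1 _ hw (by simp) (Or.inl ⟨rfl, h12⟩)
          fin_cases b <;> simp_all
        · simp only [hF, if_neg h] at heq
          exact absurd heq (Nat.ne_of_lt j.isLt)
      · -- inr, inr
        by_cases h : t = 2 ∧ Sum.inr (j, 1) ∈ s <;>
          by_cases h' : t' = 2 ∧ Sum.inr (j', 1) ∈ s
        · -- both special: t = t' = 2, need j = j'
          obtain ⟨ht, h1⟩ := h; obtain ⟨ht', h1'⟩ := h'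
          subst ht; subst ht'
          rcases lt_trichotomy (j : ℕ) (j' : ℕ) with hlt | heqj | hgt
          · exact (hrel _ hu _ h1' (by simp only [ne_eq, Sum.inr.injEq,
              Prod.mk.injEq, Fin.ext_iff]; omega) (Or.inr ⟨rfl, rfl, hlt⟩)).elim
          · simp [Fin.ext heqj]
          · exact (hrel _ hw _ h1 (by simp only [ne_eq, Sum.inr.injEq,
              Prod.mk.injEq, Fin.ext_iff]; omega) (Or.inr ⟨rfl, rfl, hgt⟩)).elim
        · simp only [hF, if_pos h, if_neg h'] at heq
          exact ((Nat.ne_of_lt j'.isLt) heq.symm).elim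
        · simp only [hF, if_neg h, if_pos h'] at heq
          exact ((Nat.ne_of_lt j.isLt) heq).elim
        · simp only [hF, if_neg h, if_neg h'] at heq
          have hjj : j = j' := Fin.ext heq
          subst hjj
          by_contra hne
          have htne : t ≠ t' := by simpa using hne
          -- neither is in the special set; use adjacency facts
          have h0 : ¬ (t = 0 ∧ t' ≠ 0) := by
            intro ⟨a1, a2⟩
            exact hrel _ hu _ hw hne (Or.inl ⟨rfl, a1, a2⟩)
          have h0' : ¬ (t' = 0 ∧ t ≠ 0) := by
            intro ⟨a1, a2⟩
            exact hrel _ hw _ hu (Ne.symm hne) (Or.inl ⟨rfl, a1, a2⟩)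
          -- so t, t' ∈ {1,2} and distinct
          have ht12 : (t = 1 ∧ t' = 2) ∨ (t = 2 ∧ t' = 1) := by
            have hlt : (t : ℕ) < 3 := t.isLt
            have hlt' : (t' : ℕ) < 3 := t'.isLt
            have e2 : ((2 : Fin 3) : ℕ) = 2 := rfl
            have e1 : ((1 : Fin 3) : ℕ) = 1 := rfl
            have e0 : ((0 : Fin 3) : ℕ) = 0 := rfl
            simp only [Ne, Fin.ext_iff, e0, e1, e2] at h0 h0' htne ⊢
            omega
          rcases ht12 with ⟨a1, a2⟩ | ⟨a1, a2⟩
          · subst a1; subst a2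
            exact h' ⟨rfl, hu⟩
          · subst a1; subst a2
            exact h ⟨rfl, hw⟩
    calc s.card ≤ (Finset.range (m + 1)).card :=
          Finset.card_le_card_of_injOn F hmaps hinj
      _ = k - 2 := by simp [hm1]
  · -- lower bound: witness
    apply le_csSup
    · refine ⟨Fintype.card (AVert k), ?_⟩
      rintro n ⟨s, -, rfl⟩
      simpa using s.card_le_univ
    · refine ⟨insert (Sum.inl 2)
        ((Finset.univ : Finset (Fin m)).image fun j => (Sum.inr (j, 2) : AVert k)), ?_, ?_⟩
      · rintro u hu w hw hne
        rw [hadj]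
        rintro ⟨-, hr⟩
        simp only [Finset.coe_insert, Set.mem_insert_iff, Finset.coe_image,
          Set.mem_image, Finset.mem_coe, Finset.mem_univ] at hu hw
        rcases hu with rfl | ⟨j, -, rfl⟩ <;> rcases hw with rfl | ⟨j', -, rfl⟩ <;>
          simp_all [ARel]
      · rw [Finset.card_insert_of_notMem (by simp), Finset.card_image_of_injective _
          (fun a b h => by simpa using h), Finset.card_univ]
        simp [hm1, hmdef]
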